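/- For nonnegative integers α, β with α + β ≥ 2, the function T_m(α,β) = 3·2^{α+β−3} + 2^{α−2} + 3·2^{β−3} + 2^{α−β−2} − (3/2)(α+β) + 5/4 (the coefficient of n in the multiplication count of H-NTT, ignoring the common (3/2)n log n term) attains its minimum over {(α,β) : α ≥ 0, β ≥ 0} ∩ (feasible region) at (α,β) = (1,1), where it equals 5/4. -/
import Mathlib


/-- Coefficient of `n` in the multiplication count of H-NTT. -/
noncomputable def Tm (α β : ℕ) : ℚ :=
  3 * (2 : ℚ) ^ ((α : ℤ) + (β : ℤ) - 3) + (2 : ℚ) ^ ((α : ℤ) - 2) +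
    3 * (2 : ℚ) ^ ((β : ℤ) - 3) + (2 : ℚ) ^ ((α : ℤ) - (β : ℤ) - 2) -
    (3 / 2) * ((α : ℚ) + (β : ℚ)) + 5 / 4

lemma Tm_eq (α β : ℕ) : Tm α β =
    3 * (2:ℚ)^α * 2^β / 8 + 2^α / 4 + 3 * 2^β / 8 + 2^α / (4 * 2^β)
      - (3/2) * ((α:ℚ) + β) + 5/4 := by
  have h2 : (2:ℚ) ≠ 0 := by norm_num
  unfold Tm
  rw [show (α:ℤ) + β - 3 = (α:ℤ) + (β:ℤ) + (-3) by ring,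
      show (α:ℤ) - 2 = (α:ℤ) + (-2) by ring,
      show (β:ℤ) - 3 = (β:ℤ) + (-3) by ring,
      show (α:ℤ) - β - 2 = (α:ℤ) + (-(β:ℤ)) + (-2) by ring]
  simp only [zpow_add₀ h2, zpow_neg, zpow_natCast]
  field_simp
  ring

lemma nat_le_pow (s : ℕ) (hs : 4 ≤ s) : s ≤ 2 ^ (s - 2) := by
  induction s with
  | zero => omega
  | succ n ih =>
    rcases Nat.lt_or_ge n 4 with h | h
    · interval_cases n <;> simp_all
    · have := ih (by omega)
      have : n + 1 ≤ 2 * 2 ^ (n - 2) := by omega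
      calc n + 1 ≤ 2 * 2 ^ (n - 2) := this
        _ = 2 ^ (n - 2 + 1) := by ring
        _ = 2 ^ (n + 1 - 2) := by congr 1; omega

/-- The H-NTT multiplication-count coefficient attains its minimum `5/4` at `(α,β) = (1,1)`. -/
theorem Tm_min : Tm 1 1 = 5 / 4 ∧ ∀ α β : ℕ, 2 ≤ α + β → Tm 1 1 ≤ Tm α β := by
  have h11 : Tm 1 1 = 5 / 4 := by rw [Tm_eq]; norm_num
  refine ⟨h11, fun α β h => ?_⟩
  rw [h11, Tm_eq]
  have hbpos : (0:ℚ) < 2 ^ β := by positivity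
  have hapos : (0:ℚ) < 2 ^ α := by positivity
  rcases Nat.lt_or_ge (α + β) 4 with hs | hs
  · have hα : α ≤ 3 := by omega
    have hβ : β ≤ 3 := by omega
    interval_cases α <;> interval_cases β <;> norm_num
  · have key : ((α:ℚ) + β) ≤ 2 ^ α * 2 ^ β / 4 := by
      have h1 : (α + β : ℕ) ≤ 2 ^ (α + β - 2) := nat_le_pow _ hs
      have h2 : 2 ^ (α + β - 2) * 4 = 2 ^ (α + β) := by
        rw [show (4:ℕ) = 2^2 by norm_num, ← pow_add]; congr 1; omega
      have h3 : (α + β : ℕ) * 4 ≤ 2 ^ (α + β) := by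
        calc (α + β) * 4 ≤ 2 ^ (α + β - 2) * 4 := by omega
          _ = 2 ^ (α + β) := h2
      have h4 : ((α:ℚ) + β) * 4 ≤ 2 ^ α * 2 ^ β := by
        have := (Nat.cast_le (α := ℚ)).mpr h3
        push_cast [pow_add] at this
        linarith
      linarith
    have hpos : (0:ℚ) < 2 ^ α / (4 * 2 ^ β) := by positivity
    nlinarith [hapos, hbpos]
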